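/- Let L, T > 0, let m > 1, let S̄ : [0,L] → ℝ be bounded and measurable, and let (h,s) be a classical solution of the tear-film system with exponents (m, m+1) on [0,L]×[0,T]. Then for every t ∈ [0,T], the functional ∫₀^L h(x,t)^{1−m} dx is differentiable in t and satisfies the identity d/dt ∫₀^L h^{1−m} dx = (m−1) ∫₀^L (S̄(x) − s(x,t)) dx − m(m−1) ∫₀^L h_{xx}(x,t)² dx. -/

import Mathlib

open Set MeasureTheory intervalIntegral Filter

open Set MeasureTheory

/-- A classical solution of the tear-film system
`h_t = −(hⁿ h_{xxx})_x − hᵐ(S̄ − s)`,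
`s_t = s_{xx} + (h_x/h − h^{n−1} h_{xxx}) s_x + s(S̄ − s) h^{m−1}`
on `[0,L] × [0,T]`, with `h > 0`, `h` four times and `s` twice continuously
differentiable in `x`, both continuously differentiable in `t` (all partial
derivatives jointly continuous), subject to the boundary conditions
`h_x = h_{xxx} = s_x = 0` at `x = 0` and `x = L`. -/
structure TearFilmSolution (L T m n : ℝ) (Sbar : ℝ → ℝ) where
  h : ℝ → ℝ → ℝ
  s : ℝ → ℝ → ℝ
  hx : ℝ → ℝ → ℝ
  hxx : ℝ → ℝ → ℝ
  hxxx : ℝ → ℝ → ℝ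
  hxxxx : ℝ → ℝ → ℝ
  ht : ℝ → ℝ → ℝ
  sx : ℝ → ℝ → ℝ
  sxx : ℝ → ℝ → ℝ
  st : ℝ → ℝ → ℝ
  h_pos : ∀ x ∈ Icc 0 L, ∀ t ∈ Icc 0 T, 0 < h x t
  hasDeriv_hx : ∀ t ∈ Icc 0 T, ∀ x ∈ Icc 0 L,
    HasDerivWithinAt (fun x' => h x' t) (hx x t) (Icc 0 L) x
  hasDeriv_hxx : ∀ t ∈ Icc 0 T, ∀ x ∈ Icc 0 L,
    HasDerivWithinAt (fun x' => hx x' t) (hxx x t) (Icc 0 L) x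
  hasDeriv_hxxx : ∀ t ∈ Icc 0 T, ∀ x ∈ Icc 0 L,
    HasDerivWithinAt (fun x' => hxx x' t) (hxxx x t) (Icc 0 L) x
  hasDeriv_hxxxx : ∀ t ∈ Icc 0 T, ∀ x ∈ Icc 0 L,
    HasDerivWithinAt (fun x' => hxxx x' t) (hxxxx x t) (Icc 0 L) x
  hasDeriv_ht : ∀ x ∈ Icc 0 L, ∀ t ∈ Icc 0 T,
    HasDerivWithinAt (fun t' => h x t') (ht x t) (Icc 0 T) t
  hasDeriv_sx : ∀ t ∈ Icc 0 T, ∀ x ∈ Icc 0 L,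
    HasDerivWithinAt (fun x' => s x' t) (sx x t) (Icc 0 L) x
  hasDeriv_sxx : ∀ t ∈ Icc 0 T, ∀ x ∈ Icc 0 L,
    HasDerivWithinAt (fun x' => sx x' t) (sxx x t) (Icc 0 L) x
  hasDeriv_st : ∀ x ∈ Icc 0 L, ∀ t ∈ Icc 0 T,
    HasDerivWithinAt (fun t' => s x t') (st x t) (Icc 0 T) t
  cont_h : ContinuousOn (fun p : ℝ × ℝ => h p.1 p.2) (Icc 0 L ×ˢ Icc 0 T)
  cont_s : ContinuousOn (fun p : ℝ × ℝ => s p.1 p.2) (Icc 0 L ×ˢ Icc 0 T)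
  cont_hx : ContinuousOn (fun p : ℝ × ℝ => hx p.1 p.2) (Icc 0 L ×ˢ Icc 0 T)
  cont_hxx : ContinuousOn (fun p : ℝ × ℝ => hxx p.1 p.2) (Icc 0 L ×ˢ Icc 0 T)
  cont_hxxx : ContinuousOn (fun p : ℝ × ℝ => hxxx p.1 p.2) (Icc 0 L ×ˢ Icc 0 T)
  cont_hxxxx : ContinuousOn (fun p : ℝ × ℝ => hxxxx p.1 p.2) (Icc 0 L ×ˢ Icc 0 T)
  cont_ht : ContinuousOn (fun p : ℝ × ℝ => ht p.1 p.2) (Icc 0 L ×ˢ Icc 0 T)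
  cont_sx : ContinuousOn (fun p : ℝ × ℝ => sx p.1 p.2) (Icc 0 L ×ˢ Icc 0 T)
  cont_sxx : ContinuousOn (fun p : ℝ × ℝ => sxx p.1 p.2) (Icc 0 L ×ˢ Icc 0 T)
  cont_st : ContinuousOn (fun p : ℝ × ℝ => st p.1 p.2) (Icc 0 L ×ˢ Icc 0 T)
  pde_h : ∀ x ∈ Icc 0 L, ∀ t ∈ Icc 0 T,
    ht x t = -(n * h x t ^ (n - 1) * hx x t * hxxx x t + h x t ^ n * hxxxx x t)
      - h x t ^ m * (Sbar x - s x t)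
  pde_s : ∀ x ∈ Icc 0 L, ∀ t ∈ Icc 0 T,
    st x t = sxx x t + (hx x t / h x t - h x t ^ (n - 1) * hxxx x t) * sx x t
      + s x t * (Sbar x - s x t) * h x t ^ (m - 1)
  bc : ∀ t ∈ Icc 0 T,
    hx 0 t = 0 ∧ hx L t = 0 ∧ hxxx 0 t = 0 ∧ hxxx L t = 0 ∧ sx 0 t = 0 ∧ sx L t = 0


/-- Differentiation under the integral sign on a rectangle, via uniform continuity. -/
lemma hasDerivWithinAt_intervalIntegral_rect
    (L T : ℝ) (hL : 0 < L) (g gt : ℝ → ℝ → ℝ)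
    (hder : ∀ x ∈ Icc (0:ℝ) L, ∀ t ∈ Icc (0:ℝ) T,
      HasDerivWithinAt (fun t' => g x t') (gt x t) (Icc 0 T) t)
    (hcg : ContinuousOn (fun p : ℝ × ℝ => g p.1 p.2) (Icc 0 L ×ˢ Icc 0 T))
    (hcgt : ContinuousOn (fun p : ℝ × ℝ => gt p.1 p.2) (Icc 0 L ×ˢ Icc 0 T))
    {t : ℝ} (htT : t ∈ Icc (0:ℝ) T) :
    HasDerivWithinAt (fun t' => ∫ x in (0:ℝ)..L, g x t')
      (∫ x in (0:ℝ)..L, gt x t) (Icc (0:ℝ) T) t := by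
  rw [hasDerivWithinAt_iff_isLittleO, Asymptotics.isLittleO_iff]
  intro c hc
  have hK : IsCompact (Icc (0:ℝ) L ×ˢ Icc (0:ℝ) T) := isCompact_Icc.prod isCompact_Icc
  have hu := hK.uniformContinuousOn_of_continuous hcgt
  rw [Metric.uniformContinuousOn_iff] at hu
  have hε0 : 0 < c / (L + 1) := div_pos hc (by linarith)
  obtain ⟨δ, hδ0, hδ⟩ := hu (c / (L + 1)) hε0
  set ε := c / (L + 1)
  have hmem : Icc (0:ℝ) T ∩ Metric.ball t δ ∈ nhdsWithin t (Icc (0:ℝ) T) :=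
    inter_mem self_mem_nhdsWithin
      (mem_nhdsWithin_of_mem_nhds (Metric.ball_mem_nhds t hδ0))
  filter_upwards [hmem] with t' ht'
  set s' : Set ℝ := Icc (0:ℝ) T ∩ Metric.ball t δ with hs'
  have hconv : Convex ℝ s' := (convex_Icc _ _).inter (convex_ball t δ)
  have hts' : t ∈ s' := ⟨htT, Metric.mem_ball_self hδ0⟩
  -- pointwise mean value bound
  have key : ∀ x ∈ Icc (0:ℝ) L,
      |g x t' - g x t - (t' - t) * gt x t| ≤ ε * |t' - t| := by
    intro x hx
    have hder' : ∀ τ ∈ s', HasDerivWithinAt (fun τ' => g x τ' - τ' * gt x t)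
        (gt x τ - gt x t) s' τ := by
      intro τ hτ
      have hsub : s' ⊆ Icc (0:ℝ) T := inter_subset_left
      have h1 := (hder x hx τ hτ.1).mono hsub
      have h2 := (hasDerivWithinAt_id τ s').mul_const (gt x t)
      have h3 := h1.sub h2
      simp only [one_mul] at h3
      exact h3
    have hbound : ∀ τ ∈ s', ‖gt x τ - gt x t‖ ≤ ε := by
      intro τ hτ
      have hd : dist ((x, τ) : ℝ × ℝ) (x, t) < δ := by
        simp only [Prod.dist_eq, dist_self, Real.dist_eq]
        rw [max_lt_iff]
        constructor
        · simpa using hδ0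
        · simpa [Real.dist_eq] using hτ.2
      have := hδ (x, τ) ⟨hx, hτ.1⟩ (x, t) ⟨hx, htT⟩ hd
      rw [Real.dist_eq] at this
      simpa [Real.norm_eq_abs] using this.le
    have H := hconv.norm_image_sub_le_of_norm_hasDerivWithin_le hder' hbound hts' ht'
    have heq : (g x t' - t' * gt x t) - (g x t - t * gt x t)
        = g x t' - g x t - (t' - t) * gt x t := by ring
    rw [Real.norm_eq_abs, Real.norm_eq_abs, heq] at H
    exact H
  -- integrability
  have cont_slice : ∀ τ ∈ Icc (0:ℝ) T, ContinuousOn (fun x => g x τ) (Icc 0 L) := by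
    intro τ hτ
    exact hcg.comp ((Continuous.prodMk continuous_id continuous_const).continuousOn) (fun x hx => ⟨hx, hτ⟩)
  have cont_gt : ContinuousOn (fun x => gt x t) (Icc 0 L) :=
    hcgt.comp ((Continuous.prodMk continuous_id continuous_const).continuousOn) (fun x hx => ⟨hx, htT⟩)
  have int1 : IntervalIntegrable (fun x => g x t') volume 0 L :=
    (cont_slice t' ht'.1).intervalIntegrable_of_Icc hL.le
  have int2 : IntervalIntegrable (fun x => g x t) volume 0 L :=
    (cont_slice t htT).intervalIntegrable_of_Icc hL.le
  have int3 : IntervalIntegrable (fun x => (t' - t) * gt x t) volume 0 L :=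
    ((cont_gt.const_smul (t' - t)).intervalIntegrable_of_Icc hL.le)
  have hsplit : (∫ x in (0:ℝ)..L, g x t') - (∫ x in (0:ℝ)..L, g x t)
      - (t' - t) • (∫ x in (0:ℝ)..L, gt x t)
      = ∫ x in (0:ℝ)..L, (g x t' - g x t - (t' - t) * gt x t) := by
    rw [smul_eq_mul, ← intervalIntegral.integral_const_mul,
      ← intervalIntegral.integral_sub int1 int2,
      ← intervalIntegral.integral_sub (int1.sub int2) int3]
  rw [hsplit]
  have hb : ‖∫ x in (0:ℝ)..L, (g x t' - g x t - (t' - t) * gt x t)‖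
      ≤ (ε * |t' - t|) * |L - 0| := by
    apply intervalIntegral.norm_integral_le_of_norm_le_const
    intro x hx
    have hx' : x ∈ Icc (0:ℝ) L := by
      rw [uIoc_of_le hL.le] at hx
      exact ⟨hx.1.le, hx.2⟩
    simpa [Real.norm_eq_abs] using key x hx'
  refine hb.trans ?_
  have h1 : ε * L ≤ c := by
    rw [div_mul_eq_mul_div, div_le_iff₀ (by linarith : (0:ℝ) < L + 1)]
    nlinarith
  have : (ε * |t' - t|) * |L - 0| = (ε * L) * |t' - t| := by
    rw [sub_zero, abs_of_pos hL]; ring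
  rw [this, Real.norm_eq_abs]
  exact mul_le_mul_of_nonneg_right h1 (abs_nonneg _)


/-- Entropy-type identity for the case `n = m + 1`:
`d/dt ∫₀^L h^{1−m} dx = (m−1)∫₀^L (S̄ − s) dx − m(m−1)∫₀^L h_{xx}² dx`. -/
theorem entropy_identity
    (L T m : ℝ) (hL : 0 < L) (hT : 0 < T) (hm : 1 < m)
    (Sbar : ℝ → ℝ) (hSmeas : Measurable Sbar)
    (hSbdd : ∃ C : ℝ, ∀ x ∈ Icc (0:ℝ) L, |Sbar x| ≤ C)
    (sol : TearFilmSolution L T m (m + 1) Sbar) :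
    ∀ t ∈ Icc (0:ℝ) T,
      HasDerivWithinAt (fun t' => ∫ x in (0:ℝ)..L, sol.h x t' ^ (1 - m))
        ((m - 1) * (∫ x in (0:ℝ)..L, (Sbar x - sol.s x t))
          - m * (m - 1) * ∫ x in (0:ℝ)..L, (sol.hxx x t) ^ 2)
        (Icc (0:ℝ) T) t := by
  intro t htT
  -- the t-derivative of the integrand
  set gt : ℝ → ℝ → ℝ := fun x τ => sol.ht x τ * (1 - m) * sol.h x τ ^ (-m) with hgt_def
  have hder : ∀ x ∈ Icc (0:ℝ) L, ∀ τ ∈ Icc (0:ℝ) T,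
      HasDerivWithinAt (fun t' => sol.h x t' ^ (1 - m)) (gt x τ) (Icc 0 T) τ := by
    intro x hx τ hτ
    have hpos := sol.h_pos x hx τ hτ
    have := (sol.hasDeriv_ht x hx τ hτ).rpow_const (p := 1 - m) (Or.inl hpos.ne')
    have he : (1 - m) - 1 = -m := by ring
    rwa [he] at this
  have hne : ∀ p ∈ Icc (0:ℝ) L ×ˢ Icc (0:ℝ) T, sol.h p.1 p.2 ≠ 0 ∨ (0:ℝ) ≤ (1 - m) :=
    fun p hp => Or.inl (sol.h_pos p.1 hp.1 p.2 hp.2).ne'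
  have hne' : ∀ p ∈ Icc (0:ℝ) L ×ˢ Icc (0:ℝ) T, sol.h p.1 p.2 ≠ 0 ∨ (0:ℝ) ≤ (-m) :=
    fun p hp => Or.inl (sol.h_pos p.1 hp.1 p.2 hp.2).ne'
  have hcg : ContinuousOn (fun p : ℝ × ℝ => sol.h p.1 p.2 ^ (1 - m))
      (Icc 0 L ×ˢ Icc 0 T) := sol.cont_h.rpow_const hne
  have hcgt : ContinuousOn (fun p : ℝ × ℝ => gt p.1 p.2) (Icc 0 L ×ˢ Icc 0 T) :=
    (sol.cont_ht.mul continuousOn_const).mul (sol.cont_h.rpow_const hne')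
  have key := hasDerivWithinAt_intervalIntegral_rect L T hL
    (fun x τ => sol.h x τ ^ (1 - m)) gt hder hcg hcgt htT
  -- continuity of slices at time t
  have slice : ∀ (f : ℝ → ℝ → ℝ),
      ContinuousOn (fun p : ℝ × ℝ => f p.1 p.2) (Icc 0 L ×ˢ Icc 0 T) →
      ContinuousOn (fun x => f x t) (Icc (0:ℝ) L) := fun f hf =>
    hf.comp ((Continuous.prodMk continuous_id continuous_const).continuousOn)
      (fun x hx => ⟨hx, htT⟩)
  have ch := slice _ sol.cont_h
  have chx := slice _ sol.cont_hx
  have chxx := slice _ sol.cont_hxx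
  have chxxx := slice _ sol.cont_hxxx
  have chxxxx := slice _ sol.cont_hxxxx
  have cs := slice _ sol.cont_s
  -- integrability facts
  have iS : IntervalIntegrable Sbar volume 0 L := by
    rw [intervalIntegrable_iff]
    obtain ⟨C, hC⟩ := hSbdd
    apply MeasureTheory.Measure.integrableOn_of_bounded (M := C) measure_Ioc_lt_top.ne
      hSmeas.aestronglyMeasurable
    apply ae_restrict_of_forall_mem measurableSet_uIoc
    intro x hx
    rw [uIoc_of_le hL.le] at hx
    exact (Real.norm_eq_abs _) ▸ hC x ⟨hx.1.le, hx.2⟩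
  have is_ : IntervalIntegrable (fun x => sol.s x t) volume 0 L :=
    cs.intervalIntegrable_of_Icc hL.le
  have i1 : IntervalIntegrable (fun x => sol.hx x t * sol.hxxx x t) volume 0 L :=
    (chx.mul chxxx).intervalIntegrable_of_Icc hL.le
  have i2 : IntervalIntegrable (fun x => sol.h x t * sol.hxxxx x t) volume 0 L :=
    (ch.mul chxxxx).intervalIntegrable_of_Icc hL.le
  have iq : IntervalIntegrable (fun x => sol.hxx x t ^ 2) volume 0 L :=
    (chxx.pow 2).intervalIntegrable_of_Icc hL.le
  -- integration by parts via FTC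
  obtain ⟨b1, b2, b3, b4, -, -⟩ := sol.bc t htT
  have hinterior : ∀ x ∈ Ioo (0:ℝ) L, Icc (0:ℝ) L ∈ nhds x :=
    fun x hx => Icc_mem_nhds hx.1 hx.2
  have ibp1 : (∫ x in (0:ℝ)..L, (sol.hxx x t ^ 2 + sol.hx x t * sol.hxxx x t)) = 0 := by
    have hftc := intervalIntegral.integral_eq_sub_of_hasDeriv_right_of_le hL.le
        (f := fun x => sol.hx x t * sol.hxx x t)
        (f' := fun x => sol.hxx x t ^ 2 + sol.hx x t * sol.hxxx x t)
        (chx.mul chxx) ?_ ((iq.add i1))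
    · rw [hftc]; simp [b1, b2]
    · intro x hx
      have d1 := (sol.hasDeriv_hxx t htT x (Ioo_subset_Icc_self hx)).hasDerivAt (hinterior x hx)
      have d2 := (sol.hasDeriv_hxxx t htT x (Ioo_subset_Icc_self hx)).hasDerivAt (hinterior x hx)
      have := d1.mul d2
      have heq : sol.hxx x t * sol.hxx x t + sol.hx x t * sol.hxxx x t
          = sol.hxx x t ^ 2 + sol.hx x t * sol.hxxx x t := by ring
      rw [heq] at this
      exact this.hasDerivWithinAt
  have ibp2 : (∫ x in (0:ℝ)..L, (sol.hx x t * sol.hxxx x t + sol.h x t * sol.hxxxx x t)) = 0 := by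
    have hftc := intervalIntegral.integral_eq_sub_of_hasDeriv_right_of_le hL.le
        (f := fun x => sol.h x t * sol.hxxx x t)
        (f' := fun x => sol.hx x t * sol.hxxx x t + sol.h x t * sol.hxxxx x t)
        (ch.mul chxxx) ?_ (i1.add i2)
    · rw [hftc]; simp [b3, b4]
    · intro x hx
      have d1 := (sol.hasDeriv_hx t htT x (Ioo_subset_Icc_self hx)).hasDerivAt (hinterior x hx)
      have d2 := (sol.hasDeriv_hxxxx t htT x (Ioo_subset_Icc_self hx)).hasDerivAt (hinterior x hx)
      exact (d1.mul d2).hasDerivWithinAt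
  have hI1 : (∫ x in (0:ℝ)..L, sol.hx x t * sol.hxxx x t)
      = -(∫ x in (0:ℝ)..L, sol.hxx x t ^ 2) := by
    have := intervalIntegral.integral_add iq i1
    rw [ibp1] at this; linarith
  have hI2 : (∫ x in (0:ℝ)..L, sol.h x t * sol.hxxxx x t)
      = ∫ x in (0:ℝ)..L, sol.hxx x t ^ 2 := by
    have := intervalIntegral.integral_add i1 i2
    rw [ibp2, hI1] at this; linarith
  -- identify gt with the PDE right-hand side
  have hgt_eq : ∀ x ∈ Icc (0:ℝ) L, gt x t
      = (m - 1) * (Sbar x - sol.s x t) + ((m - 1) * (m + 1)) * (sol.hx x t * sol.hxxx x t)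
        + (m - 1) * (sol.h x t * sol.hxxxx x t) := by
    intro x hx
    have hpos := sol.h_pos x hx t htT
    have hpde := sol.pde_h x hx t htT
    have he3 : sol.h x t ^ ((m + 1) - 1) = sol.h x t ^ m := by norm_num
    have e1 : sol.h x t ^ m * sol.h x t ^ (-m) = 1 := by
      rw [← Real.rpow_add hpos]; norm_num
    have e2 : sol.h x t ^ (m + 1) * sol.h x t ^ (-m) = sol.h x t := by
      rw [← Real.rpow_add hpos]
      norm_num
    rw [hgt_def]
    simp only
    rw [hpde, he3]
    linear_combination ((1 - m) * (-(m + 1) * sol.hx x t * sol.hxxx x t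
        - (Sbar x - sol.s x t))) * e1 + ((1 - m) * (-(sol.hxxxx x t))) * e2
  -- compute the integral of gt
  have hval : (∫ x in (0:ℝ)..L, gt x t)
      = (m - 1) * (∫ x in (0:ℝ)..L, (Sbar x - sol.s x t))
        - m * (m - 1) * ∫ x in (0:ℝ)..L, (sol.hxx x t) ^ 2 := by
    have hcongr : (∫ x in (0:ℝ)..L, gt x t)
        = ∫ x in (0:ℝ)..L, ((m - 1) * (Sbar x - sol.s x t)
            + ((m - 1) * (m + 1)) * (sol.hx x t * sol.hxxx x t)
            + (m - 1) * (sol.h x t * sol.hxxxx x t)) := by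
      apply intervalIntegral.integral_congr
      intro x hx
      rw [uIcc_of_le hL.le] at hx
      exact hgt_eq x hx
    have iSs : IntervalIntegrable (fun x => (m - 1) * (Sbar x - sol.s x t)) volume 0 L :=
      (iS.sub is_).const_mul _
    have i1' : IntervalIntegrable
        (fun x => ((m - 1) * (m + 1)) * (sol.hx x t * sol.hxxx x t)) volume 0 L :=
      i1.const_mul _
    have i2' : IntervalIntegrable
        (fun x => (m - 1) * (sol.h x t * sol.hxxxx x t)) volume 0 L := i2.const_mul _
    rw [hcongr, intervalIntegral.integral_add (iSs.add i1') i2',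
      intervalIntegral.integral_add iSs i1',
      intervalIntegral.integral_const_mul, intervalIntegral.integral_const_mul,
      intervalIntegral.integral_const_mul, hI1, hI2]
    ring
  rw [← hval]
  exact key
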